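/- Let C be a model knot complex and let t ∈ (0,2). Then the jump of the derivative of Υ_C at t satisfies ΔΥ_C'(t) = (2/t)·( i(p_t⁺) − i(p_t⁻) ), where i(p) denotes the first coordinate of a lattice point p. In particular, Υ_C fails to be differentiable at t if and only if p_t⁻ ≠ p_t⁺. -/

import Mathlib

open scoped BigOperators

/-- A "pre-complex": a finite distinguished basis `B`, a grading `gr`,
bifiltration functions `alg` and `alex`, and a differential recorded by its
matrix `d` over the field `F₂ = ZMod 2`:  `∂ x = ∑ y, d x y • y`. -/
structure PreComplex where
  B : Type
  fB : Fintype B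
  dB : DecidableEq B
  gr : B → ℤ
  alg : B → ℤ
  alex : B → ℤ
  d : B → B → ZMod 2

attribute [instance] PreComplex.fB PreComplex.dB

namespace PreComplex

variable (C : PreComplex)

/-- Chains: F₂-linear combinations of basis elements. -/
abbrev Chain : Type := C.B → ZMod 2

/-- The boundary of a chain, extending `∂ x = ∑ y, d x y • y` linearly. -/
def bdry (c : C.Chain) : C.Chain := fun y => ∑ x, c x * C.d x y

/-- A chain is homogeneous of grading `k`. -/
def isGraded (c : C.Chain) (k : ℤ) : Prop := ∀ x, c x ≠ 0 → C.gr x = k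

def isCycle (c : C.Chain) : Prop := C.bdry c = 0

def isBoundary (c : C.Chain) : Prop := ∃ w : C.Chain, C.bdry w = c

/-- A cycle of grading 0 representing the nonzero class of `H₀(C)`. -/
def GenCycle (z : C.Chain) : Prop :=
  C.isCycle z ∧ C.isGraded z 0 ∧ ¬ C.isBoundary z

/-- The bifiltration level of a basis element. -/
def lev (x : C.B) : ℤ × ℤ := (C.alg x, C.alex x)

/-- A model knot complex: `∂ ∘ ∂ = 0`; `∂` drops the grading by one and does
not increase either filtration; the homology is one dimensional, concentrated
in grading 0; and the minimum over cycles representing the generator of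
`H₀(C)` of their maximal `alg` (resp. `alex`) filtration level is 0. -/
def IsModel : Prop :=
  (∀ x z, (∑ y, C.d x y * C.d y z) = 0) ∧
  (∀ x y, C.d x y ≠ 0 → C.gr y = C.gr x - 1 ∧ C.alg y ≤ C.alg x ∧ C.alex y ≤ C.alex x) ∧
  (∀ k : ℤ, k ≠ 0 → ∀ z : C.Chain, C.isCycle z → C.isGraded z k → C.isBoundary z) ∧
  (∃ z : C.Chain, C.GenCycle z) ∧
  (∀ z z' : C.Chain, C.GenCycle z → C.GenCycle z' → C.isBoundary (z + z')) ∧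
  (∃ z : C.Chain, C.GenCycle z ∧ ∀ x, z x ≠ 0 → C.alg x ≤ 0) ∧
  (∀ z : C.Chain, C.GenCycle z → ∃ x, z x ≠ 0 ∧ 0 ≤ C.alg x) ∧
  (∃ z : C.Chain, C.GenCycle z ∧ ∀ x, z x ≠ 0 → C.alex x ≤ 0) ∧
  (∀ z : C.Chain, C.GenCycle z → ∃ x, z x ≠ 0 ∧ 0 ≤ C.alex x)

/-- An acyclic complex: conditions (i) and (ii) hold but the homology vanishes. -/
def IsAcyclic : Prop :=
  (∀ x z, (∑ y, C.d x y * C.d y z) = 0) ∧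
  (∀ x y, C.d x y ≠ 0 → C.gr y = C.gr x - 1 ∧ C.alg y ≤ C.alg x ∧ C.alex y ≤ C.alex x) ∧
  (∀ z : C.Chain, C.isCycle z → C.isBoundary z)

end PreComplex

/-- `f_t(i,j) = (t/2)·j + (1 − t/2)·i`. -/
noncomputable def fval (t : ℝ) (p : ℤ × ℤ) : ℝ :=
  (t / 2) * (p.2 : ℝ) + (1 - t / 2) * (p.1 : ℝ)

namespace PreComplex

variable (C : PreComplex)

/-- A chain lies in the subcomplex `F_{t,s}`. -/
def inF (t s : ℝ) (c : C.Chain) : Prop :=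
  ∀ x, c x ≠ 0 → fval t (C.lev x) ≤ s

/-- `γ_C(t)`: the minimal `s` such that `H₀(F_{t,s}) → H₀(C)` is surjective,
i.e. such that `F_{t,s}` contains a cycle representing the generator. -/
noncomputable def gamma (t : ℝ) : ℝ :=
  sInf {s : ℝ | ∃ z : C.Chain, C.GenCycle z ∧ C.inF t s z}

/-- The Upsilon invariant `Υ_C(t) = −2 γ_C(t)`. -/
noncomputable def Upsilon (t : ℝ) : ℝ := -2 * C.gamma t

/-- `P`: the set of bifiltration levels of basis elements. -/
def PSet : Set (ℤ × ℤ) := Set.range C.lev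

/-- `P_u = { p ∈ P : f_u(p) = γ_C(u) }`. -/
def Pt (u : ℝ) : Set (ℤ × ℤ) := {p ∈ C.PSet | fval u p = C.gamma u}

/-- `p` is the negative pivot point of `C` at `t`. -/
def IsNegPivot (t : ℝ) (p : ℤ × ℤ) : Prop :=
  ∃ δ₀ > (0 : ℝ), ∀ δ : ℝ, 0 < δ → δ < δ₀ → C.Pt (t - δ) ∩ C.Pt t = {p}

/-- `p` is the positive pivot point of `C` at `t`. -/
def IsPosPivot (t : ℝ) (p : ℤ × ℤ) : Prop :=
  ∃ δ₀ > (0 : ℝ), ∀ δ : ℝ, 0 < δ → δ < δ₀ → C.Pt (t + δ) ∩ C.Pt t = {p}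

/-- Cycles in `F_{t−δ, γ_C(t−δ)}` representing the nonzero class of `H₀(C)`. -/
def ZminusAt (t δ : ℝ) : Set C.Chain :=
  {z | C.GenCycle z ∧ C.inF (t - δ) (C.gamma (t - δ)) z}

/-- Cycles in `F_{t+δ, γ_C(t+δ)}` representing the nonzero class of `H₀(C)`. -/
def ZplusAt (t δ : ℝ) : Set C.Chain :=
  {z | C.GenCycle z ∧ C.inF (t + δ) (C.gamma (t + δ)) z}

/-- `Z⁻`: the (eventual, for all sufficiently small `δ > 0`) set of cycles in
`F_{t−δ, γ_C(t−δ)}` representing the nonzero class of `H₀(C)`. -/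
def Zminus (t : ℝ) : Set C.Chain :=
  {z | ∃ δ₀ > (0 : ℝ), ∀ δ : ℝ, 0 < δ → δ < δ₀ → z ∈ C.ZminusAt t δ}

/-- `Z⁺`: the (eventual, for all sufficiently small `δ > 0`) set of cycles in
`F_{t+δ, γ_C(t+δ)}` representing the nonzero class of `H₀(C)`. -/
def Zplus (t : ℝ) : Set C.Chain :=
  {z | ∃ δ₀ > (0 : ℝ), ∀ δ : ℝ, 0 < δ → δ < δ₀ → z ∈ C.ZplusAt t δ}

/-- A basis element lies in the subcomplex `F_{t,γ_C(t)} + F_{s,r}`. -/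
def inRegion (t s r : ℝ) (x : C.B) : Prop :=
  fval t (C.lev x) ≤ C.gamma t ∨ fval s (C.lev x) ≤ r

/-- `z` and `z'` represent the same homology class in `H₀(F_{t,γ_C(t)} + F_{s,r})`
(over F₂ the difference `z − z'` is `z + z'`). -/
def sameClass (t s r : ℝ) (z z' : C.Chain) : Prop :=
  (∀ x, z x ≠ 0 → C.inRegion t s r x) ∧
  (∀ x, z' x ≠ 0 → C.inRegion t s r x) ∧
  ∃ w : C.Chain, (∀ x, w x ≠ 0 → C.inRegion t s r x) ∧ C.bdry w = z + z'

/-- The set of `r` for which some `z⁻ ∈ Z⁻` and `z⁺ ∈ Z⁺` represent the same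
class in `H₀(F_{t,γ_C(t)} + F_{s,r})`. -/
def gamma2Set (t s : ℝ) : Set ℝ :=
  {r | ∃ zm ∈ C.Zminus t, ∃ zp ∈ C.Zplus t, C.sameClass t s r zm zp}

/-- `γ²_{C,t}(s)`, as an extended real: the minimum of `gamma2Set`
(`−∞` if the condition holds for every `r`). -/
noncomputable def gamma2 (t s : ℝ) : EReal :=
  sInf ((fun r : ℝ => (r : EReal)) '' C.gamma2Set t s)

/-- `Υ²_{C,t}(s) = −2 (γ²_{C,t}(s) − γ_C(t))`. -/
noncomputable def Upsilon2 (t s : ℝ) : EReal :=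
  (-2 : EReal) * (C.gamma2 t s - (C.gamma t : EReal))

end PreComplex

/-- The jump of the derivative of `f` at `t`: the right-hand derivative minus
the left-hand derivative. -/
noncomputable def derivJump (f : ℝ → ℝ) (t : ℝ) : ℝ :=
  derivWithin f (Set.Ici t) t - derivWithin f (Set.Iic t) t

/-- Direct sum of two pre-complexes. -/
def PreComplex.dsum (C A : PreComplex) : PreComplex where
  B := C.B ⊕ A.B
  fB := inferInstance
  dB := inferInstance
  gr := Sum.elim C.gr A.gr
  alg := Sum.elim C.alg A.alg
  alex := Sum.elim C.alex A.alex
  d := fun x y =>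
    match x, y with
    | Sum.inl x, Sum.inl y => C.d x y
    | Sum.inr x, Sum.inr y => A.d x y
    | _, _ => 0

/-- Tensor product of two pre-complexes. -/
def PreComplex.tensor (C₁ C₂ : PreComplex) : PreComplex where
  B := C₁.B × C₂.B
  fB := inferInstance
  dB := inferInstance
  gr := fun x => C₁.gr x.1 + C₂.gr x.2
  alg := fun x => C₁.alg x.1 + C₂.alg x.2
  alex := fun x => C₁.alex x.1 + C₂.alex x.2
  d := fun x y =>
    (if x.2 = y.2 then C₁.d x.1 y.1 else 0) + (if x.1 = y.1 then C₂.d x.2 y.2 else 0)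

/-- An isomorphism of pre-complexes: a bijection of the distinguished bases
preserving `gr`, `alg`, `alex`, whose linear extension commutes with the
differentials. -/
def PreComplex.Iso (C₁ C₂ : PreComplex) : Prop :=
  ∃ e : C₁.B ≃ C₂.B,
    (∀ x, C₂.gr (e x) = C₁.gr x) ∧
    (∀ x, C₂.alg (e x) = C₁.alg x) ∧
    (∀ x, C₂.alex (e x) = C₁.alex x) ∧
    (∀ x y, C₂.d (e x) (e y) = C₁.d x y)

/-- Stable equivalence of pre-complexes: isomorphism after adding acyclic
summands. -/
def PreComplex.StablyEquiv (C₁ C₂ : PreComplex) : Prop :=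
  ∃ A₁ A₂ : PreComplex, A₁.IsAcyclic ∧ A₂.IsAcyclic ∧ (C₁.dsum A₁).Iso (C₂.dsum A₂)


private lemma hasDerivAt_negfval (p : ℤ × ℤ) (t : ℝ) :
    HasDerivAt (fun u => -2 * fval u p) ((p.1 : ℝ) - p.2) t := by
  have h : (fun u : ℝ => -2 * fval u p)
      = fun u => ((p.1 : ℝ) - p.2) * u + (-2 * (p.1 : ℝ)) := by
    funext u; simp only [fval]; ring
  rw [h]
  simpa using ((hasDerivAt_id t).const_mul ((p.1 : ℝ) - (p.2 : ℝ))).add_const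
    (-2 * (p.1 : ℝ))

/-- `ΔΥ_C'(t) = (2/t)·(i(p_t⁺) − i(p_t⁻))`; in particular `Υ_C`
fails to be differentiable at `t` if and only if `p_t⁻ ≠ p_t⁺`. -/
theorem upsilon_jump_eq (C : PreComplex) (hC : C.IsModel)
    (t : ℝ) (ht : t ∈ Set.Ioo (0 : ℝ) 2)
    (pm pp : ℤ × ℤ) (hpm : C.IsNegPivot t pm) (hpp : C.IsPosPivot t pp) :
    derivJump C.Upsilon t = (2 / t) * ((pp.1 : ℝ) - (pm.1 : ℝ)) ∧
    (¬ DifferentiableAt ℝ C.Upsilon t ↔ pm ≠ pp) := by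
  obtain ⟨ht0, ht2⟩ := ht
  obtain ⟨δm, hδm0, hm⟩ := hpm
  obtain ⟨δp, hδp0, hp⟩ := hpp
  have hmm : ∀ δ : ℝ, 0 < δ → δ < δm → fval (t - δ) pm = C.gamma (t - δ) := by
    intro δ h1 h2
    have h : pm ∈ C.Pt (t - δ) ∩ C.Pt t := by
      rw [hm δ h1 h2]; exact Set.mem_singleton _
    exact h.1.2
  have hppδ : ∀ δ : ℝ, 0 < δ → δ < δp → fval (t + δ) pp = C.gamma (t + δ) := by
    intro δ h1 h2
    have h : pp ∈ C.Pt (t + δ) ∩ C.Pt t := by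
      rw [hp δ h1 h2]; exact Set.mem_singleton _
    exact h.1.2
  have hpt_m : fval t pm = C.gamma t := by
    have h : pm ∈ C.Pt (t - δm / 2) ∩ C.Pt t := by
      rw [hm (δm / 2) (by linarith) (by linarith)]; exact Set.mem_singleton _
    exact h.2.2
  have hpt_p : fval t pp = C.gamma t := by
    have h : pp ∈ C.Pt (t + δp / 2) ∩ C.Pt t := by
      rw [hp (δp / 2) (by linarith) (by linarith)]; exact Set.mem_singleton _
    exact h.2.2
  have heq : fval t pm = fval t pp := hpt_m.trans hpt_p.symm
  have hUm : ∀ u : ℝ, t - δm < u → u ≤ t → C.Upsilon u = -2 * fval u pm := by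
    intro u h1 h2
    rcases eq_or_lt_of_le h2 with rfl | h2
    · show -2 * C.gamma u = _; rw [← hpt_m]
    · have h3 := hmm (t - u) (by linarith) (by linarith)
      rw [show t - (t - u) = u by ring] at h3
      show -2 * C.gamma u = _; rw [← h3]
  have hUp : ∀ u : ℝ, t ≤ u → u < t + δp → C.Upsilon u = -2 * fval u pp := by
    intro u h1 h2
    rcases eq_or_lt_of_le h1 with rfl | h1
    · show -2 * C.gamma t = _; rw [← hpt_p]
    · have h3 := hppδ (u - t) (by linarith) (by linarith)
      rw [show t + (u - t) = u by ring] at h3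
      show -2 * C.gamma u = _; rw [← h3]
  have hEm : C.Upsilon =ᶠ[nhdsWithin t (Set.Iic t)] fun u => -2 * fval u pm := by
    filter_upwards [Ioc_mem_nhdsLE (show t - δm < t by linarith)] with u hu
    exact hUm u hu.1 hu.2
  have hEp : C.Upsilon =ᶠ[nhdsWithin t (Set.Ici t)] fun u => -2 * fval u pp := by
    filter_upwards [Ico_mem_nhdsGE (show t < t + δp by linarith)] with u hu
    exact hUp u hu.1 hu.2
  have hUt : C.Upsilon t = -2 * fval t pm := hUm t (by linarith) le_rfl
  have hUt' : C.Upsilon t = -2 * fval t pp := hUp t le_rfl (by linarith)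
  have hdm : derivWithin C.Upsilon (Set.Iic t) t = (pm.1 : ℝ) - pm.2 := by
    rw [hEm.derivWithin_eq hUt]
    exact (hasDerivAt_negfval pm t).hasDerivWithinAt.derivWithin
      (uniqueDiffOn_Iic t t (by simp))
  have hdp : derivWithin C.Upsilon (Set.Ici t) t = (pp.1 : ℝ) - pp.2 := by
    rw [hEp.derivWithin_eq hUt']
    exact (hasDerivAt_negfval pp t).hasDerivWithinAt.derivWithin
      (uniqueDiffOn_Ici t t (by simp))
  have heq' : (t / 2) * (pm.2 : ℝ) + (1 - t / 2) * (pm.1 : ℝ)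
      = (t / 2) * (pp.2 : ℝ) + (1 - t / 2) * (pp.1 : ℝ) := heq
  have key : derivJump C.Upsilon t = (2 / t) * ((pp.1 : ℝ) - (pm.1 : ℝ)) := by
    rw [derivJump, hdp, hdm]
    have htne : t ≠ 0 := ne_of_gt ht0
    field_simp
    nlinarith [heq']
  refine ⟨key, ?_, ?_⟩
  · intro h hpe
    apply h
    subst hpe
    have hE : C.Upsilon =ᶠ[nhds t] fun u => -2 * fval u pm := by
      filter_upwards [Ioo_mem_nhds (show t - δm < t by linarith)
        (show t < t + δp by linarith)] with u hu
      rcases le_or_gt u t with h2 | h2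
      · exact hUm u hu.1 h2
      · exact hUp u h2.le hu.2
    exact (Filter.EventuallyEq.differentiableAt_iff hE).2
      (hasDerivAt_negfval pm t).differentiableAt
  · intro hne hdiff
    have h1 : derivWithin C.Upsilon (Set.Ici t) t = deriv C.Upsilon t :=
      hdiff.derivWithin (uniqueDiffOn_Ici t t (by simp))
    have h2 : derivWithin C.Upsilon (Set.Iic t) t = deriv C.Upsilon t :=
      hdiff.derivWithin (uniqueDiffOn_Iic t t (by simp))
    have hz : derivJump C.Upsilon t = 0 := by rw [derivJump, h1, h2, sub_self]
    rw [key] at hz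
    have h1ne : pm.1 ≠ pp.1 := by
      intro h1eq
      apply hne
      have : (pm.2 : ℝ) = (pp.2 : ℝ) := by
        rw [h1eq] at heq'
        have : (t / 2) * (pm.2 : ℝ) = (t / 2) * (pp.2 : ℝ) := by linarith
        exact mul_left_cancel₀ (by positivity) this
      exact Prod.ext h1eq (by exact_mod_cast this)
    have : (pp.1 : ℝ) - (pm.1 : ℝ) ≠ 0 := by
      intro h
      exact h1ne (by exact_mod_cast (sub_eq_zero.1 h).symm)
    have h2t : (2 : ℝ) / t ≠ 0 := by positivity
    exact (mul_ne_zero h2t this) hz
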